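/- For every finite family β_1, …, β_r of nonzero complex numbers there exists an integer n ≥ 1 such that Re(β_j^n) > 0 for every j ∈ {1, …, r}. -/

import Mathlib

theorem exists_pow_re_pos (r : ℕ) (β : Fin r → ℂ) (hβ : ∀ j, β j ≠ 0) :
    ∃ n : ℕ, 1 ≤ n ∧ ∀ j, 0 < ((β j) ^ n).re := by
  set u : Fin r → ℂ := fun j => β j / ((‖β j‖ : ℝ) : ℂ) with hu
  have hunorm : ∀ j, ‖u j‖ = 1 := by
    intro j
    have h0 : ‖β j‖ ≠ 0 := by
      simpa using hβ j
    simp [hu, norm_div, Complex.norm_real, div_self h0]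
  set f : ℕ → (Fin r → ℂ) := fun m j => (u j) ^ m with hf
  have hfb : ∀ m, f m ∈ Metric.closedBall (0 : Fin r → ℂ) 1 := by
    intro m
    rw [mem_closedBall_zero_iff]
    refine pi_norm_le_iff_of_nonneg zero_le_one |>.2 fun j => ?_
    show ‖(u j) ^ m‖ ≤ 1
    rw [norm_pow, hunorm j, one_pow]
  obtain ⟨x, -, φ, hφ, hconv⟩ :=
    (isCompact_closedBall (0 : Fin r → ℂ) 1).tendsto_subseq hfb
  obtain ⟨N, hN⟩ := Metric.tendsto_atTop.mp hconv (1/2) (by norm_num)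
  have hd1 := hN N le_rfl
  have hd2 := hN (N + 1) (Nat.le_succ N)
  set m₁ := φ N
  set m₂ := φ (N + 1)
  have hm : m₁ < m₂ := hφ (Nat.lt_succ_self N)
  have hdist : dist (f m₁) (f m₂) < 1 := by
    calc dist (f m₁) (f m₂) ≤ dist (f m₁) x + dist (f m₂) x := dist_triangle_right _ _ _
    _ < 1/2 + 1/2 := add_lt_add hd1 hd2
    _ = 1 := by norm_num
  refine ⟨m₂ - m₁, by omega, fun j => ?_⟩
  have hcomp : dist (f m₁ j) (f m₂ j) < 1 := (dist_le_pi_dist _ _ j).trans_lt hdist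
  have habs : ‖(u j) ^ m₁ - (u j) ^ m₂‖ < 1 := by
    simpa [hf, Complex.dist_eq] using hcomp
  set n := m₂ - m₁ with hn
  have hsplit : (u j) ^ m₂ = (u j) ^ m₁ * (u j) ^ n := by
    rw [← pow_add]; congr 1; omega
  have habs1 : ‖u j ^ m₁‖ = 1 := by rw [norm_pow, hunorm j, one_pow]
  have habs' : ‖1 - (u j) ^ n‖ < 1 := by
    have : (u j) ^ m₁ - (u j) ^ m₂ = (u j) ^ m₁ * (1 - (u j) ^ n) := by
      rw [hsplit]; ring
    rw [this, norm_mul, habs1, one_mul] at habs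
    exact habs
  set z := (u j) ^ n with hz
  have hzabs : ‖z‖ = 1 := by rw [hz, norm_pow, hunorm j, one_pow]
  have hre : 1/2 < z.re := by
    have h1 : Complex.normSq (1 - z) < 1 := by
      have := habs'
      rw [← Complex.sq_norm]
      nlinarith [norm_nonneg (1 - z)]
    have h2 : Complex.normSq z = 1 := by
      rw [← Complex.sq_norm, hzabs]; norm_num
    simp [Complex.normSq_apply] at h1 h2
    nlinarith
  -- now β j ^ n = |β j|^n * z
  have h0 : ((‖β j‖ : ℝ) : ℂ) ≠ 0 := by
    simpa using hβ j
  have hβeq : β j = ((‖β j‖ : ℝ) : ℂ) * u j := by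
    show β j = _ * (β j / ((‖β j‖ : ℝ) : ℂ))
    rw [mul_div_cancel₀ _ h0]
  have hpow : (β j) ^ n = ((‖β j‖ : ℝ) ^ n : ℝ) * z := by
    conv_lhs => rw [hβeq]
    rw [mul_pow, hz]
    push_cast
    ring
  rw [hpow]
  have hpos : (0 : ℝ) < ‖β j‖ ^ n :=
    pow_pos (norm_pos_iff.mpr (hβ j)) n
  have : (((‖β j‖ ^ n : ℝ) : ℂ) * z).re = (‖β j‖ ^ n) * z.re := by
    simp [Complex.mul_re, ← Complex.ofReal_pow]
  rw [this]
  positivity
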